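/- Let H be a Hilbert space, C a finite index set, and (g_c)_{c∈C}, (h_c)_{c∈C} two families of projections on H each summing to the identity: ∑_c g_c = 1 and ∑_c h_c = 1. If ∑_{c∈C} g_c h_c = 1, then g_c = h_c for every c ∈ C. -/

import Mathlib

open scoped ComplexInnerProductSpace in
private lemma pvm_ortho {H : Type*} [NormedAddCommGroup H] [InnerProductSpace ℂ H]
    [CompleteSpace H]
    {C : Type*} [Fintype C] (P : C → H →L[ℂ] H)
    (sa : ∀ c, IsSelfAdjoint (P c)) (idem : ∀ c, P c ∘L P c = P c)
    (hsum : ∑ c, P c = 1) :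
    ∀ c d, c ≠ d → ∀ x : H, P c (P d x) = 0 := by
  classical
  have key : ∀ x : H, ∑ c, (‖P c x‖ ^ 2 : ℝ) = ‖x‖ ^ 2 := by
    intro x
    have hC : (∑ c, (‖P c x‖ ^ 2 : ℂ)) = (‖x‖ ^ 2 : ℂ) := by
      have h1 : ∀ c, (inner ℂ (P c x) x : ℂ) = (‖P c x‖ ^ 2 : ℂ) := by
        intro c
        have hx : P c x = P c (P c x) := by
          conv_lhs => rw [← idem c]
          rfl
        calc (inner ℂ (P c x) x : ℂ) = inner ℂ (P c (P c x)) x := by rw [← hx]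
          _ = inner ℂ (P c x) (P c x) := (sa c).isSymmetric (P c x) x
          _ = (‖P c x‖ ^ 2 : ℂ) := by
              rw [inner_self_eq_norm_sq_to_K]; norm_cast
      calc (∑ c, (‖P c x‖ ^ 2 : ℂ)) = ∑ c, (inner ℂ (P c x) x : ℂ) := by
            simp_rw [h1]
        _ = inner ℂ ((∑ c, P c) x) x := by
            rw [ContinuousLinearMap.sum_apply, sum_inner]
        _ = inner ℂ x x := by rw [hsum]; rfl
        _ = (‖x‖ ^ 2 : ℂ) := by rw [inner_self_eq_norm_sq_to_K]; norm_cast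
    exact_mod_cast hC
  intro c d hcd x
  have h1 := key (P d x)
  have h2 : ‖P d (P d x)‖ ^ 2 = ‖P d x‖ ^ 2 := by
    have : P d (P d x) = P d x := by
      conv_rhs => rw [← idem d]
      rfl
    rw [this]
  have h3 : ∑ e ∈ Finset.univ.erase d, (‖P e (P d x)‖ ^ 2 : ℝ) = 0 := by
    have hsplit := Finset.add_sum_erase Finset.univ (fun e => (‖P e (P d x)‖ ^ 2 : ℝ))
      (Finset.mem_univ d)
    linarith [h1, h2, hsplit]
  have h4 : (‖P c (P d x)‖ ^ 2 : ℝ) = 0 := by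
    have hnn : ∀ e ∈ Finset.univ.erase d, (0:ℝ) ≤ ‖P e (P d x)‖ ^ 2 :=
      fun e _ => sq_nonneg _
    exact (Finset.sum_eq_zero_iff_of_nonneg hnn).mp h3 c
      (Finset.mem_erase.mpr ⟨hcd, Finset.mem_univ c⟩)
  have := pow_eq_zero_iff (n := 2) (by norm_num) |>.mp h4
  exact norm_eq_zero.mp this

/-- two PVMs with `∑ g_c h_c = 1` coincide. -/
theorem stmt13 {H : Type*} [NormedAddCommGroup H] [InnerProductSpace ℂ H] [CompleteSpace H]
    {C : Type*} [Fintype C] (g h : C → H →L[ℂ] H)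
    (hgsa : ∀ c, IsSelfAdjoint (g c)) (hgidem : ∀ c, g c ∘L g c = g c)
    (hhsa : ∀ c, IsSelfAdjoint (h c)) (hhidem : ∀ c, h c ∘L h c = h c)
    (hgsum : ∑ c, g c = 1) (hhsum : ∑ c, h c = 1)
    (hmix : ∑ c, g c ∘L h c = 1) :
    ∀ c, g c = h c := by
  classical
  have gortho := pvm_ortho g hgsa hgidem hgsum
  have hortho := pvm_ortho h hhsa hhidem hhsum
  intro d
  ext x
  have hmix' : ∀ y : H, ∑ c, g c (h c y) = y := by
    intro y
    have := congrArg (fun T => T y) hmix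
    simpa [ContinuousLinearMap.sum_apply] using this
  -- g d x = g d (h d x)
  have e1 : g d x = g d (h d x) := by
    have := congrArg (g d) (hmix' x)
    rw [map_sum] at this
    rw [Finset.sum_eq_single_of_mem d (Finset.mem_univ d)
      (fun c _ hc => gortho d c (Ne.symm hc) (h c x))] at this
    have hdd : g d (g d (h d x)) = g d (h d x) := by
      conv_lhs => rw [show g d (g d (h d x)) = (g d ∘L g d) (h d x) from rfl, hgidem d]
    rw [hdd] at this
    exact this.symm
  -- h d x = g d (h d x)
  have e2 : h d x = g d (h d x) := by
    have := hmix' (h d x)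
    rw [Finset.sum_eq_single_of_mem d (Finset.mem_univ d)
      (fun c _ hc => by rw [hortho c d hc x]; simp)] at this
    have hdd : h d (h d x) = h d x := by
      conv_rhs => rw [← hhidem d]
      rfl
    rw [hdd] at this
    exact this.symm
  rw [e1]; exact e2.symm
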